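/- arXiv:1907.10906 — 4 statements merged into one kernel-verified Lean document; each statement's English description precedes it below -/
import Mathlib

section
/- Let d ≥ 1, let w ∈ ℝ^d be a nonzero vector, let a ~ N(0, (1/d)I_d) be a Gaussian random vector in ℝ^d, and set ā := a/‖a‖. Then for every τ > 0 and every t ∈ (0,1): Φ(√d·τ·(1+t)/‖w‖) − 2·P(‖a‖ > 1+t) ≤ P(|⟨w, ā⟩| ≥ τ) ≤ Φ(√d·τ·(1−t)/‖w‖) + 2·P(‖a‖ < 1−t). (Applied with w = U₂ᵀU₁ā_i, this bounds the cross-subspace conditional connection probability q_i in the semi-random UoS model: if aff² − t ≤ ‖w‖² ≤ aff² + t, then Φ(τ_d(1+t)/√(aff²−t)) − 2P(‖a‖>1+t) ≤ q_i ≤ Φ(τ_d(1−t)/√(aff²+t)) + 2P(‖a‖<1−t).) -/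
open MeasureTheory ProbabilityTheory Real
open scoped RealInnerProductSpace ENNReal NNReal

/-- `Φ(t) = ∫_{|x| > t} (1/√(2π)) e^{-x²/2} dx`, the two-sided standard Gaussian tail. -/
noncomputable def Phi (t : ℝ) : ℝ :=
  ∫ x in {x : ℝ | t < |x|}, (Real.sqrt (2 * Real.pi))⁻¹ * Real.exp (-x ^ 2 / 2)

section Aux

lemma pdf_mul_identity (v u : ℝ≥0) (hv : v ≠ 0) (hu : u ≠ 0) (z x : ℝ) :
    gaussianPDFReal 0 v x * gaussianPDFReal x u z
      = gaussianPDFReal 0 (v + u) z * gaussianPDFReal ((v : ℝ) * z / ((v : ℝ) + u)) (v * u / (v + u)) x := by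
  have hV : (0:ℝ) < v := lt_of_le_of_ne (v.coe_nonneg) (by exact_mod_cast (Ne.symm hv))
  have hU : (0:ℝ) < u := lt_of_le_of_ne (u.coe_nonneg) (by exact_mod_cast (Ne.symm hu))
  have hVU : (0:ℝ) < (v:ℝ) + u := by positivity
  have hcoe1 : ((v + u : ℝ≥0) : ℝ) = (v:ℝ) + u := by push_cast; ring
  have hcoe2 : ((v * u / (v + u) : ℝ≥0) : ℝ) = (v:ℝ) * u / ((v:ℝ) + u) := by push_cast; ring
  unfold gaussianPDFReal
  rw [hcoe1, hcoe2]
  have hexp : rexp (- (x - 0)^2 / (2 * v)) * rexp (- (z - x)^2 / (2 * u))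
      = rexp (- (z - 0)^2 / (2 * ((v:ℝ) + u)))
        * rexp (- (x - (v:ℝ) * z / ((v:ℝ) + u))^2 / (2 * ((v:ℝ) * u / ((v:ℝ)+u)))) := by
    rw [← Real.exp_add, ← Real.exp_add]
    congr 1
    field_simp
    ring
  have hconst : (√(2 * π * v))⁻¹ * (√(2 * π * u))⁻¹
      = (√(2 * π * ((v:ℝ) + u)))⁻¹ * (√(2 * π * ((v:ℝ) * u / ((v:ℝ)+u))))⁻¹ := by
    rw [← mul_inv, ← mul_inv, ← Real.sqrt_mul (by positivity), ← Real.sqrt_mul (by positivity)]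
    congr 2
    field_simp
  calc (√(2 * π * v))⁻¹ * rexp (- (x - 0)^2 / (2 * v)) * ((√(2 * π * u))⁻¹ * rexp (- (z - x)^2 / (2 * u)))
      = ((√(2 * π * v))⁻¹ * (√(2 * π * u))⁻¹) * (rexp (- (x - 0)^2 / (2 * v)) * rexp (- (z - x)^2 / (2 * u))) := by ring
    _ = _ := by rw [hexp, hconst]; ring

lemma lintegral_pdf_mul (v u : ℝ≥0) (hv : v ≠ 0) (hu : u ≠ 0) (z : ℝ) :
    ∫⁻ x, gaussianPDF 0 v x * gaussianPDF x u z = gaussianPDF 0 (v + u) z := by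
  have hw : (v * u / (v + u) : ℝ≥0) ≠ 0 := by
    apply div_ne_zero (mul_ne_zero hv hu)
    simp [hv, hu]
  calc ∫⁻ x, gaussianPDF 0 v x * gaussianPDF x u z
      = ∫⁻ x, gaussianPDF 0 (v + u) z
            * gaussianPDF ((v : ℝ) * z / ((v : ℝ) + u)) (v * u / (v + u)) x := by
        congr 1; ext x
        rw [gaussianPDF, gaussianPDF, gaussianPDF, gaussianPDF,
          ← ENNReal.ofReal_mul (gaussianPDFReal_nonneg _ _ _),
          ← ENNReal.ofReal_mul (gaussianPDFReal_nonneg _ _ _),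
          pdf_mul_identity v u hv hu z x]
    _ = gaussianPDF 0 (v + u) z * ∫⁻ x, gaussianPDF ((v : ℝ) * z / ((v : ℝ) + u)) (v * u / (v + u)) x :=
        lintegral_const_mul' _ _ (by rw [gaussianPDF]; exact ENNReal.ofReal_ne_top)
    _ = gaussianPDF 0 (v + u) z := by
        rw [lintegral_gaussianPDF_eq_one _ hw, mul_one]

lemma measurable_pdf2 (u : ℝ≥0) : Measurable (fun p : ℝ × ℝ => gaussianPDF p.1 u p.2) := by
  unfold gaussianPDF gaussianPDFReal
  fun_prop

lemma gaussian_prod_add (v u : ℝ≥0) :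
    ((gaussianReal 0 v).prod (gaussianReal 0 u)).map (fun p : ℝ × ℝ => p.1 + p.2)
      = gaussianReal 0 (v + u) := by
  by_cases hv : v = 0
  · subst hv
    rw [gaussianReal_zero_var, Measure.dirac_prod, Measure.map_map (by fun_prop) (by fun_prop)]
    simp [Function.comp_def]
  by_cases hu : u = 0
  · subst hu
    rw [gaussianReal_zero_var, Measure.prod_dirac, Measure.map_map (by fun_prop) (by fun_prop)]
    simp [Function.comp_def]
  ext s hs
  rw [Measure.map_apply measurable_add hs, Measure.prod_apply (measurable_add hs)]
  have h1 : ∀ x : ℝ, (gaussianReal 0 u) (Prod.mk x ⁻¹' ((fun p : ℝ × ℝ => p.1 + p.2) ⁻¹' s))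
      = ∫⁻ z in s, gaussianPDF x u z := by
    intro x
    have : Prod.mk x ⁻¹' ((fun p : ℝ × ℝ => p.1 + p.2) ⁻¹' s) = (fun y => x + y) ⁻¹' s := rfl
    rw [this, ← Measure.map_apply (by fun_prop) hs, gaussianReal_map_const_add, zero_add,
      gaussianReal_apply _ hu]
  simp_rw [h1]
  rw [gaussianReal_of_var_ne_zero _ hv,
    lintegral_withDensity_eq_lintegral_mul _ (measurable_gaussianPDF _ _)
      (Measurable.lintegral_prod_right (ν := volume.restrict s) (f := fun x z => gaussianPDF x u z) (measurable_pdf2 u))]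
  have hFm : Measurable (fun p : ℝ × ℝ => gaussianPDF 0 v p.1 * gaussianPDF p.1 u p.2) :=
    ((measurable_gaussianPDF 0 v).comp measurable_fst).mul (measurable_pdf2 u)
  calc ∫⁻ x, (gaussianPDF 0 v * fun x => ∫⁻ z in s, gaussianPDF x u z) x
      = ∫⁻ x, ∫⁻ z in s, gaussianPDF 0 v x * gaussianPDF x u z := by
        refine lintegral_congr fun x => ?_
        exact (lintegral_const_mul' _ _ (by rw [gaussianPDF]; exact ENNReal.ofReal_ne_top)).symm
    _ = ∫⁻ z in s, ∫⁻ x, gaussianPDF 0 v x * gaussianPDF x u z := by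
        exact lintegral_lintegral_swap hFm.aemeasurable
    _ = ∫⁻ z in s, gaussianPDF 0 (v + u) z := by
        refine lintegral_congr fun z => lintegral_pdf_mul v u hv hu z
    _ = gaussianReal 0 (v + u) s := (gaussianReal_apply _ (by simp [hv, hu]) s).symm

variable {Ω : Type} [MeasurableSpace Ω] {μ : Measure Ω} [IsProbabilityMeasure μ]

lemma indep_add_gaussian {X Y : Ω → ℝ} (hX : Measurable X) (hY : Measurable Y)
    (hind : IndepFun X Y μ) {v u : ℝ≥0}
    (hXg : μ.map X = gaussianReal 0 v) (hYg : μ.map Y = gaussianReal 0 u) :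
    μ.map (fun ω => X ω + Y ω) = gaussianReal 0 (v + u) := by
  have hprod : μ.map (fun ω => (X ω, Y ω)) = (μ.map X).prod (μ.map Y) :=
    (indepFun_iff_map_prod_eq_prod_map_map hX.aemeasurable hY.aemeasurable).mp hind
  have : (fun ω => X ω + Y ω) = (fun p : ℝ × ℝ => p.1 + p.2) ∘ (fun ω => (X ω, Y ω)) := rfl
  rw [this, ← Measure.map_map measurable_add (hX.prodMk hY), hprod, hXg, hYg,
    gaussian_prod_add]

lemma map_sum_gaussian {ι : Type*} (Y : ι → Ω → ℝ) (hmeas : ∀ i, Measurable (Y i))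
    (hind : iIndepFun Y μ) (v : ι → ℝ≥0)
    (hg : ∀ i, μ.map (Y i) = gaussianReal 0 (v i)) (s : Finset ι) :
    μ.map (fun ω => ∑ i ∈ s, Y i ω) = gaussianReal 0 (∑ i ∈ s, v i) := by
  classical
  induction s using Finset.induction_on with
  | empty =>
      simp only [Finset.sum_empty]
      rw [Measure.map_const, measure_univ, one_smul, gaussianReal_zero_var]
  | insert i s hi ih =>
      have hindep : IndepFun (Y i) (fun ω => ∑ j ∈ s, Y j ω) μ := by
        have h := (hind.indepFun_finset_sum_of_notMem hmeas hi).symm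
        have he : (∑ j ∈ s, Y j) = (fun ω => ∑ j ∈ s, Y j ω) := by
          ext ω; simp
        rwa [he] at h
      have := indep_add_gaussian (hmeas i) (by fun_prop) hindep (hg i) ih
      simpa [Finset.sum_insert hi] using this

lemma meas_abs_gt (r : ℝ) : MeasurableSet {x : ℝ | r < |x|} :=
  measurableSet_lt measurable_const measurable_abs

lemma Phi_eq (r : ℝ) : Phi r = ((gaussianReal 0 1) {x : ℝ | r < |x|}).toReal := by
  rw [gaussianReal_apply_eq_integral 0 one_ne_zero,
    ENNReal.toReal_ofReal (setIntegral_nonneg (meas_abs_gt r)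
      fun x _ => gaussianPDFReal_nonneg _ _ _)]
  refine setIntegral_congr_fun (meas_abs_gt r) fun x _ => ?_
  unfold gaussianPDFReal
  norm_num

lemma gaussian_abs_boundary (v : ℝ≥0) (hv : v ≠ 0) (s : ℝ) :
    (gaussianReal 0 v) {x : ℝ | s ≤ |x|} = (gaussianReal 0 v) {x : ℝ | s < |x|} := by
  have hnull : (gaussianReal 0 v) {x : ℝ | |x| = s} = 0 := by
    refine gaussianReal_absolutelyContinuous 0 hv ?_
    refine measure_mono_null (t := {s, -s}) (fun x hx => ?_) ?_
    · have hx' : x = s ∨ x = -s := by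
        rcases abs_cases x with ⟨h1, _⟩ | ⟨h1, _⟩
        · left; rw [← h1]; exact hx
        · right; rw [← neg_eq_iff_eq_neg, ← h1]; exact hx
      simp only [Set.mem_insert_iff, Set.mem_singleton_iff]; exact hx'
    · have h2 : ({s, -s} : Set ℝ) = {s} ∪ {-s} := rfl
      rw [h2]
      exact measure_union_null Real.volume_singleton Real.volume_singleton
  apply measure_congr
  have hae : ∀ᵐ x ∂(gaussianReal 0 v), ¬ |x| = s := by
    rw [ae_iff]; simpa using hnull
  filter_upwards [hae] with x hx
  have : (s ≤ |x|) = (s < |x|) := by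
    simp only [eq_iff_iff]
    constructor
    · intro h; exact lt_of_le_of_ne h (fun h' => hx h'.symm)
    · exact le_of_lt
  show (s ≤ |x|) = (s < |x|)
  exact congrArg (· : Prop → Prop) this

lemma gaussian_tail (v : ℝ≥0) (hv : v ≠ 0) (s : ℝ) :
    ((gaussianReal 0 v) {x : ℝ | s ≤ |x|}).toReal = Phi (s / Real.sqrt v) := by
  set c : ℝ := Real.sqrt v with hc
  have hcpos : 0 < c := Real.sqrt_pos.mpr (by exact_mod_cast pos_iff_ne_zero.mpr hv)
  have hc2 : NNReal.mk (c ^ 2) (sq_nonneg _) * 1 = v := by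
    ext
    simp [hc, Real.sq_sqrt (v.coe_nonneg)]
  have hmap : (gaussianReal 0 1).map (c * ·) = gaussianReal 0 v := by
    rw [gaussianReal_map_const_mul, mul_zero, hc2]
  rw [gaussian_abs_boundary v hv s, ← hmap,
    Measure.map_apply (measurable_const_mul c) (meas_abs_gt s)]
  have hset : (c * ·) ⁻¹' {x : ℝ | s < |x|} = {y : ℝ | s / c < |y|} := by
    ext y
    simp only [Set.mem_preimage, Set.mem_setOf_eq, abs_mul, abs_of_pos hcpos]
    rw [div_lt_iff₀ hcpos, mul_comm]
  rw [hset, Phi_eq]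

end Aux

/-- For `a ~ N(0, (1/d) I_d)` in `ℝ^d`, `ā = a / ‖a‖`, a nonzero vector `w`,
`τ > 0` and `t ∈ (0,1)`:
`Φ(√d·τ·(1+t)/‖w‖) − 2·P(‖a‖ > 1+t) ≤ P(|⟨w, ā⟩| ≥ τ) ≤ Φ(√d·τ·(1−t)/‖w‖) + 2·P(‖a‖ < 1−t)`. -/
theorem statement_4
    (d : ℕ) (hd : 1 ≤ d)
    (Ω : Type) [MeasurableSpace Ω] (μ : Measure Ω) [IsProbabilityMeasure μ]
    (a : Ω → EuclideanSpace ℝ (Fin d))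
    (ha_meas : Measurable a)
    (ha_indep : iIndepFun (fun j ω => a ω j) μ)
    (ha_gauss : ∀ j, μ.map (fun ω => a ω j) = gaussianReal 0 ((d : ℝ≥0)⁻¹))
    (w : EuclideanSpace ℝ (Fin d)) (hw : w ≠ 0)
    (τ : ℝ) (hτ : 0 < τ) (t : ℝ) (ht0 : 0 < t) (ht1 : t < 1) :
    Phi (Real.sqrt d * τ * (1 + t) / ‖w‖) - 2 * (μ {ω | 1 + t < ‖a ω‖}).toReal ≤
        (μ {ω | τ ≤ |⟪w, ‖a ω‖⁻¹ • a ω⟫|}).toReal ∧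
      (μ {ω | τ ≤ |⟪w, ‖a ω‖⁻¹ • a ω⟫|}).toReal ≤
        Phi (Real.sqrt d * τ * (1 - t) / ‖w‖) + 2 * (μ {ω | ‖a ω‖ < 1 - t}).toReal := by
  have hdR : (0:ℝ) < d := by exact_mod_cast Nat.lt_of_lt_of_le Nat.zero_lt_one hd
  have hwpos : (0:ℝ) < ‖w‖ := norm_pos_iff.mpr hw
  -- the linear statistic
  set X : Ω → ℝ := fun ω => ∑ j, w j * a ω j with hX
  have hinner : ∀ ω, ⟪w, a ω⟫ = X ω := fun ω => by
    simp [hX, PiLp.inner_apply, RCLike.inner_apply, conj_trivial]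
    exact Finset.sum_congr rfl fun _ _ => mul_comm _ _
  have hcoord : ∀ j : Fin d, Measurable fun ω => a ω j :=
    fun j => (measurable_pi_apply j).comp ((WithLp.measurable_ofLp _ _).comp ha_meas)
  have hXmeas : Measurable X := by
    apply Finset.measurable_sum
    intro j _
    exact (hcoord j).const_mul (w j)
  -- distribution of X
  set V : ℝ≥0 := ∑ j, ((w j)^2).toNNReal * (d : ℝ≥0)⁻¹ with hV
  have hanon : ∀ c : ℝ, NNReal.mk (c^2) (sq_nonneg c) = (c^2).toNNReal := fun c => by
    rw [← NNReal.coe_inj]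
    simp [Real.coe_toNNReal _ (sq_nonneg c)]
  have hVcoe : (V : ℝ) = ‖w‖ ^ 2 / d := by
    have hnorm : ‖w‖ ^ 2 = ∑ j, (w j) ^ 2 := by
      rw [EuclideanSpace.norm_eq, Real.sq_sqrt (by positivity)]
      simp [sq_abs]
    push_cast [hV]
    rw [hnorm, Finset.sum_div]
    refine Finset.sum_congr rfl fun j _ => ?_
    rw [div_eq_mul_inv, Real.coe_toNNReal _ (sq_nonneg (w j))]
  have hVne : V ≠ 0 := by
    have hVpos : (0:ℝ) < V := by
      rw [hVcoe]; exact div_pos (pow_pos hwpos 2) hdR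
    intro h
    rw [h] at hVpos
    simp at hVpos
  have hmapX : μ.map X = gaussianReal 0 V := by
    refine map_sum_gaussian _ (fun j => (hcoord j).const_mul (w j)) ?_ _ (fun j => ?_) _
    · exact ha_indep.comp (fun j x => w j * x) fun j => measurable_const_mul _
    · have : (fun ω => w j * a ω j) = (fun x => w j * x) ∘ (fun ω => a ω j) := rfl
      rw [this, ← Measure.map_map (measurable_const_mul _) (hcoord j), ha_gauss j,
        gaussianReal_map_const_mul, mul_zero, hanon]
  -- tail formula
  have hsqrtV : Real.sqrt V = ‖w‖ / Real.sqrt d := by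
    rw [hVcoe, Real.sqrt_div (sq_nonneg _), Real.sqrt_sq (norm_nonneg _)]
  have htail : ∀ s : ℝ, (μ {ω | s ≤ |X ω|}).toReal = Phi (Real.sqrt d * s / ‖w‖) := by
    intro s
    have hset : {ω | s ≤ |X ω|} = X ⁻¹' {x | s ≤ |x|} := rfl
    rw [hset, ← Measure.map_apply hXmeas (measurableSet_le measurable_const measurable_abs),
      hmapX, gaussian_tail V hVne s]
    congr 1
    rw [hsqrtV]
    have hsd : (0:ℝ) < Real.sqrt d := Real.sqrt_pos.mpr hdR
    field_simp
  -- event rewriting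
  have hEev : ∀ ω, |⟪w, ‖a ω‖⁻¹ • a ω⟫| = ‖a ω‖⁻¹ * |X ω| := by
    intro ω
    rw [real_inner_smul_right, hinner, abs_mul, abs_of_nonneg (inv_nonneg.2 (norm_nonneg _))]
  -- upper bound
  have hupper : (μ {ω | τ ≤ |⟪w, ‖a ω‖⁻¹ • a ω⟫|}).toReal ≤
      Phi (Real.sqrt d * τ * (1 - t) / ‖w‖) + 2 * (μ {ω | ‖a ω‖ < 1 - t}).toReal := by
    have hsub : {ω | τ ≤ |⟪w, ‖a ω‖⁻¹ • a ω⟫|} ⊆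
        {ω | τ * (1 - t) ≤ |X ω|} ∪ {ω | ‖a ω‖ < 1 - t} := by
      intro ω hω
      simp only [Set.mem_setOf_eq, hEev ω] at hω
      by_cases hn : ‖a ω‖ < 1 - t
      · exact Or.inr hn
      · push_neg at hn
        left
        have hna : (0:ℝ) < ‖a ω‖ := lt_of_lt_of_le (by linarith) hn
        have h1 : τ * ‖a ω‖ ≤ |X ω| := by
          have h2 := mul_le_mul_of_nonneg_left hω (le_of_lt hna)
          rw [mul_inv_cancel_left₀ (ne_of_gt hna)] at h2
          linarith
        calc τ * (1 - t) ≤ τ * ‖a ω‖ := by nlinarith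
          _ ≤ |X ω| := h1
    have hle := le_trans (measure_mono (μ := μ) hsub) (measure_union_le _ _)
    have hle' : (μ {ω | τ ≤ |⟪w, ‖a ω‖⁻¹ • a ω⟫|}).toReal ≤
        (μ {ω | τ * (1 - t) ≤ |X ω|}).toReal + (μ {ω | ‖a ω‖ < 1 - t}).toReal := by
      rw [← ENNReal.toReal_add (measure_ne_top μ _) (measure_ne_top μ _)]
      exact ENNReal.toReal_mono (by finiteness) hle
    have harg : Real.sqrt d * (τ * (1 - t)) / ‖w‖ = Real.sqrt d * τ * (1 - t) / ‖w‖ := by ring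
    rw [htail (τ * (1 - t)), harg] at hle'
    have := ENNReal.toReal_nonneg (a := μ {ω | ‖a ω‖ < 1 - t})
    linarith
  -- lower bound
  have hlower : Phi (Real.sqrt d * τ * (1 + t) / ‖w‖) - 2 * (μ {ω | 1 + t < ‖a ω‖}).toReal ≤
      (μ {ω | τ ≤ |⟪w, ‖a ω‖⁻¹ • a ω⟫|}).toReal := by
    set j0 : Fin d := ⟨0, hd⟩ with hj0
    have hG : μ {ω | a ω = 0} = 0 := by
      have hsub : {ω | a ω = 0} ⊆ (fun ω => a ω j0) ⁻¹' {0} := by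
        intro ω hω
        simp only [Set.mem_setOf_eq] at hω
        simp [Set.mem_preimage, hω]

      refine measure_mono_null hsub ?_
      rw [← Measure.map_apply (hcoord j0) (measurableSet_singleton 0), ha_gauss j0]
      refine gaussianReal_absolutelyContinuous 0 ?_ Real.volume_singleton
      exact inv_ne_zero (Nat.cast_ne_zero.mpr (by omega))
    have hsub : {ω | τ * (1 + t) ≤ |X ω|} ⊆
        {ω | τ ≤ |⟪w, ‖a ω‖⁻¹ • a ω⟫|} ∪ ({ω | 1 + t < ‖a ω‖} ∪ {ω | a ω = 0}) := by
      intro ω hω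
      simp only [Set.mem_setOf_eq, Set.mem_union] at *
      by_cases h0 : a ω = 0
      · exact Or.inr (Or.inr h0)
      by_cases hn : 1 + t < ‖a ω‖
      · exact Or.inr (Or.inl hn)
      push_neg at hn
      left
      rw [hEev ω]
      have hna : (0:ℝ) < ‖a ω‖ := norm_pos_iff.mpr h0
      have h1 : τ * ‖a ω‖ ≤ |X ω| := le_trans (by nlinarith) hω
      calc τ = ‖a ω‖⁻¹ * (τ * ‖a ω‖) := by field_simp
        _ ≤ ‖a ω‖⁻¹ * |X ω| := by
            exact mul_le_mul_of_nonneg_left h1 (inv_nonneg.2 (norm_nonneg _))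
    have hle := le_trans (measure_mono (μ := μ) hsub) (measure_union_le _ _)
    have hle2 := le_trans hle (add_le_add_right (measure_union_le _ _) _)
    rw [hG, add_zero] at hle2
    have hle' : (μ {ω | τ * (1 + t) ≤ |X ω|}).toReal ≤
        (μ {ω | τ ≤ |⟪w, ‖a ω‖⁻¹ • a ω⟫|}).toReal + (μ {ω | 1 + t < ‖a ω‖}).toReal := by
      rw [← ENNReal.toReal_add (measure_ne_top μ _) (measure_ne_top μ _)]
      exact ENNReal.toReal_mono (by finiteness) hle2
    have harg : Real.sqrt d * (τ * (1 + t)) / ‖w‖ = Real.sqrt d * τ * (1 + t) / ‖w‖ := by ring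
    rw [htail (τ * (1 + t)), harg] at hle'
    have := ENNReal.toReal_nonneg (a := μ {ω | 1 + t < ‖a ω‖})
    linarith
  exact ⟨hlower, hupper⟩
end

section
/- Let N ≥ 1 and let M ∈ ℝ^{N×N} be a symmetric matrix whose diagonal entries are all equal to c ∈ ℝ. Let ξ₁, …, ξ_N be i.i.d. Bernoulli(1/2) random variables and let S := {i : ξ_i = 1}. Then λ_max(M) ≤ c + 4·E[ ‖M_{S,Sᶜ}‖_op ], where M_{S,Sᶜ} denotes the submatrix of M with rows indexed by S and columns indexed by Sᶜ, ‖·‖_op denotes the operator (spectral) norm, with the convention that the norm is 0 when S or Sᶜ is empty, and λ_max(M) is the largest eigenvalue of M. -/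
open MeasureTheory ProbabilityTheory
open scoped RealInnerProductSpace ENNReal

private theorem quad_eq_s9 (N : ℕ) (A : Matrix (Fin N) (Fin N) ℝ) (v : EuclideanSpace ℝ (Fin N)) :
    ⟪v, Matrix.toEuclideanLin A v⟫ = ∑ i, ∑ j, A i j * v j * v i := by
  rw [Matrix.toEuclideanLin_apply]
  simp only [PiLp.inner_apply, RCLike.inner_apply, conj_trivial,
    PiLp.toLp_apply, Matrix.mulVec, dotProduct,
    Finset.mul_sum]
  apply Finset.sum_congr rfl; intro i _
  rw [Finset.sum_mul]

/-- decoupling: Let `M ∈ ℝ^{N×N}` be symmetric with all diagonal entries equal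
to `c`, let `ξ₁, …, ξ_N` be i.i.d. Bernoulli(1/2) and `S = {i : ξᵢ = 1}`.  Then
`λ_max(M) ≤ c + 4·E‖M_{S,Sᶜ}‖_op`, where the submatrix norm is realized as the operator norm
of the matrix keeping entries with row in `S` and column in `Sᶜ` and zeroing all others
(this equals the operator norm of the rectangular submatrix, with the convention that it is `0`
when `S` or `Sᶜ` is empty).  `λ_max(M)` is encoded by an orthonormal eigenbasis `B` and an
antitone eigenvalue sequence `ev`, so that `λ_max(M) = ev 0`. -/
theorem statement_9
    (N : ℕ) (hN : 1 ≤ N)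
    (M : Matrix (Fin N) (Fin N) ℝ) (hM : M.IsSymm)
    (c : ℝ) (hdiag : ∀ i, M i i = c)
    (Ω : Type) [MeasurableSpace Ω] (μ : Measure Ω) [IsProbabilityMeasure μ]
    (ξ : Fin N → Ω → Bool)
    (hmeas : ∀ i, Measurable (ξ i))
    (hindep : iIndepFun ξ μ)
    (hber : ∀ i, μ {ω | ξ i ω = true} = 1 / 2)
    (ev : Fin N → ℝ) (B : Fin N → EuclideanSpace ℝ (Fin N))
    (hev : Antitone ev) (hB : Orthonormal ℝ B)
    (heig : ∀ i, Matrix.toEuclideanLin M (B i) = ev i • B i) :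
    ev ⟨0, by omega⟩ ≤ c + 4 * ∫ ω, ‖Matrix.toEuclideanCLM (𝕜 := ℝ)
      (Matrix.of fun i j => if ξ i ω = true ∧ ξ j ω = false then M i j else 0)‖ ∂μ := by
  classical
  set i0 : Fin N := ⟨0, by omega⟩ with hi0
  set v : EuclideanSpace ℝ (Fin N) := B i0 with hvdef
  have hvnorm : ‖v‖ = 1 := hB.1 i0
  -- masked matrix as a function of the Boolean vector
  set mask : (Fin N → Bool) → Matrix (Fin N) (Fin N) ℝ :=
    fun b => Matrix.of fun i j => if b i = true ∧ b j = false then M i j else 0 with hmask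
  set F : Ω → ℝ := fun ω => ‖Matrix.toEuclideanCLM (𝕜 := ℝ) (mask (fun i => ξ i ω))‖ with hF
  -- Step A: ev i0 equals the quadratic form
  have hA : ev i0 = ∑ i, ∑ j, M i j * v j * v i := by
    have h1 : ⟪v, Matrix.toEuclideanLin M v⟫ = ev i0 := by
      rw [hvdef, heig i0, real_inner_smul_right, real_inner_self_eq_norm_sq, hvnorm]
      ring
    rw [← h1, quad_eq_s9]
  -- Step B: split off the diagonal
  have hnormsq : ∑ i, v i * v i = 1 := by
    have h2 : ⟪v, v⟫ = 1 := by rw [real_inner_self_eq_norm_sq, hvnorm]; norm_num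
    rw [← h2, PiLp.inner_apply]
    simp [sq]
  set T : ℝ := ∑ i, ∑ j, (if i = j then 0 else M i j * v j * v i) with hT

  have hsplit : ev i0 = c + T := by
    have hrow : ∀ i : Fin N, ∑ j, M i j * v j * v i
        = c * (v i * v i) + ∑ j, (if i = j then 0 else M i j * v j * v i) := by
      intro i
      have key : ∀ j, M i j * v j * v i
          = (if i = j then M i j * v j * v i else 0)
            + (if i = j then 0 else M i j * v j * v i) := by
        intro j; by_cases h : i = j <;> simp [h]
      rw [Finset.sum_congr rfl (fun j _ => key j), Finset.sum_add_distrib,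
        Finset.sum_ite_eq Finset.univ i (fun j => M i j * v j * v i)]
      simp [hdiag i]
      ring
    rw [hA, Finset.sum_congr rfl (fun i _ => hrow i), Finset.sum_add_distrib,
      ← Finset.mul_sum, hnormsq, mul_one, hT]

  -- pointwise quadratic form of the masked matrix
  set g : Ω → ℝ := fun ω => ∑ i, ∑ j,
    (if ξ i ω = true ∧ ξ j ω = false then M i j else 0) * v j * v i with hg
  have hset : ∀ i j : Fin N, MeasurableSet ((ξ i ⁻¹' {true}) ∩ (ξ j ⁻¹' {false})) :=
    fun i j => ((hmeas i) (measurableSet_singleton true)).inter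
      ((hmeas j) (measurableSet_singleton false))
  have hber' : ∀ i : Fin N, μ (ξ i ⁻¹' {true}) = 1/2 := by
    intro i
    have : ξ i ⁻¹' {true} = {ω | ξ i ω = true} := by ext ω; simp
    rw [this]; exact hber i
  have hmu : ∀ i j : Fin N, i ≠ j →
      (μ ((ξ i ⁻¹' {true}) ∩ (ξ j ⁻¹' {false}))).toReal = 1/4 := by
    intro i j hij
    have h2 : μ (ξ j ⁻¹' {false}) = 1/2 := by
      have hcomp : ξ j ⁻¹' {false} = (ξ j ⁻¹' {true})ᶜ := by
        ext ω; simp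
      rw [hcomp, measure_compl ((hmeas j) (measurableSet_singleton true))
        (measure_ne_top _ _), measure_univ, hber' j, one_div, ENNReal.one_sub_inv_two]
    rw [(hindep.indepFun hij).measure_inter_preimage_eq_mul {true} {false}
      (measurableSet_singleton true) (measurableSet_singleton false), hber' i, h2,
      ENNReal.toReal_mul]
    simp only [one_div, ENNReal.toReal_inv, ENNReal.toReal_ofNat]
    norm_num
  have hterm : ∀ i j : Fin N,
      (fun ω => (if ξ i ω = true ∧ ξ j ω = false then M i j else 0) * v j * v i)
      = Set.indicator ((ξ i ⁻¹' {true}) ∩ (ξ j ⁻¹' {false}))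
          (fun _ => M i j * v j * v i) := by
    intro i j; funext ω
    simp only [Set.indicator, Set.mem_inter_iff, Set.mem_preimage, Set.mem_singleton_iff]
    by_cases h : ξ i ω = true ∧ ξ j ω = false
    · rw [if_pos h, if_pos h]
    · rw [if_neg h, if_neg h, zero_mul, zero_mul]
  have hint_term : ∀ i j : Fin N, Integrable
      (fun ω => (if ξ i ω = true ∧ ξ j ω = false then M i j else 0) * v j * v i) μ := by
    intro i j; rw [hterm i j]
    exact (integrable_const _).indicator (hset i j)
  have hg_int : Integrable g μ := by
    rw [hg]
    apply integrable_finset_sum; intro i _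
    exact integrable_finset_sum _ (fun j _ => hint_term i j)
  have hg_integral : ∫ ω, g ω ∂μ = (1/4) * T := by
    rw [hg, integral_finset_sum _
      (fun i _ => integrable_finset_sum _ (fun j _ => hint_term i j))]
    rw [Finset.sum_congr rfl (fun i _ => integral_finset_sum _ (fun j _ => hint_term i j))]
    rw [hT, Finset.mul_sum]
    apply Finset.sum_congr rfl; intro i _
    rw [Finset.mul_sum]
    apply Finset.sum_congr rfl; intro j _
    rw [hterm i j, integral_indicator_const _ (hset i j)]
    by_cases hij : i = j
    · subst hij
      have : (ξ i ⁻¹' {true}) ∩ (ξ i ⁻¹' {false}) = ∅ := by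
        ext ω; simp
      rw [if_pos rfl, this]
      simp
    · rw [if_neg hij, smul_eq_mul, measureReal_def, hmu i j hij]
  -- pointwise bound by the operator norm
  have hgle : ∀ ω, g ω ≤ F ω := by
    intro ω
    have heq : g ω = ⟪v, Matrix.toEuclideanCLM (𝕜 := ℝ) (mask (fun i => ξ i ω)) v⟫ := by
      have hcoe : Matrix.toEuclideanCLM (𝕜 := ℝ) (mask (fun i => ξ i ω)) v
          = Matrix.toEuclideanLin (mask (fun i => ξ i ω)) v := by
        rw [← Matrix.coe_toEuclideanCLM_eq_toEuclideanLin]; rfl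
      rw [hg, hcoe, quad_eq_s9]
      rfl
    rw [heq, hF]
    set A := Matrix.toEuclideanCLM (𝕜 := ℝ) (mask (fun i => ξ i ω))
    calc ⟪v, A v⟫ ≤ ‖v‖ * ‖A v‖ := real_inner_le_norm _ _
      _ ≤ ‖v‖ * (‖A‖ * ‖v‖) := by
          apply mul_le_mul_of_nonneg_left (A.le_opNorm v) (norm_nonneg _)
      _ = ‖A‖ := by rw [hvnorm]; ring
  -- integrability of F
  have hFmeas : Measurable F := by
    have : F = (fun b : Fin N → Bool => ‖Matrix.toEuclideanCLM (𝕜 := ℝ) (mask b)‖)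
        ∘ (fun ω i => ξ i ω) := rfl
    rw [this]
    exact (measurable_of_countable _).comp (measurable_pi_lambda _ hmeas)
  have hF_int : Integrable F μ := by
    set C := Finset.univ.sup' Finset.univ_nonempty
      (fun b : Fin N → Bool => ‖Matrix.toEuclideanCLM (𝕜 := ℝ) (mask b)‖) with hC
    apply Integrable.mono' (integrable_const C) hFmeas.aestronglyMeasurable
    filter_upwards with ω
    rw [Real.norm_eq_abs, abs_of_nonneg (norm_nonneg _)]
    exact Finset.le_sup' (f := fun b : Fin N → Bool =>
      ‖Matrix.toEuclideanCLM (𝕜 := ℝ) (mask b)‖) (Finset.mem_univ (fun i => ξ i ω))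
  have hle : ∫ ω, g ω ∂μ ≤ ∫ ω, F ω ∂μ := integral_mono hg_int hF_int hgle
  have hgoal : ev i0 ≤ c + 4 * ∫ ω, F ω ∂μ := by
    rw [hsplit]
    have hT4 : T = 4 * ∫ ω, g ω ∂μ := by rw [hg_integral]; ring
    rw [hT4]
    linarith
  exact hgoal
end

section
/- Let d ≥ 1, let a ~ N(0, (1/d)I_d) be a Gaussian random vector in ℝ^d with coordinates a₁, …, a_d, and let 0 ≤ λ₁, …, λ_d ≤ 1. Then for every t > 0, P( |Σ_i λ_i²·a_i² − (Σ_i λ_i²)/d| > 2t·√((Σ_i λ_i²)/d) + t² + 4/d ) < 2·e^{−d·t²/2}. -/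
open MeasureTheory ProbabilityTheory Real
open scoped RealInnerProductSpace ENNReal NNReal

set_option maxHeartbeats 2000000
open MeasureTheory ProbabilityTheory Real
open scoped ENNReal NNReal

lemma aux_one_sub {v w : ℝ} (hv : 0 ≤ v) (hw : 0 ≤ w) (h2v : 2*v < 1) (h : v + 2*v*w ≤ w) :
    (Real.sqrt (1 - 2*v))⁻¹ ≤ Real.exp w := by
  have h1 : (0:ℝ) < 1 - 2*v := by linarith
  have hkey : Real.exp (-(2*w)) ≤ 1 - 2*v := by
    have h1w : 1 + 2*w ≤ Real.exp (2*w) := by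
      have := Real.add_one_le_exp (2*w); linarith
    rw [Real.exp_neg]
    rw [inv_le_iff_one_le_mul₀ (Real.exp_pos _)]
    nlinarith [Real.exp_pos (2*w)]
  have hsq : Real.exp (-w) ≤ Real.sqrt (1 - 2*v) := by
    have : Real.exp (-w) = Real.sqrt (Real.exp (-(2*w))) := by
      rw [show -(2*w) = (-w) + (-w) by ring, Real.exp_add,
        Real.sqrt_mul_self (Real.exp_nonneg _)]
    rw [this]
    exact Real.sqrt_le_sqrt hkey
  calc (Real.sqrt (1 - 2*v))⁻¹ ≤ (Real.exp (-w))⁻¹ := by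
        apply inv_anti₀ (Real.exp_pos _) hsq
    _ = Real.exp w := by rw [← Real.exp_neg, neg_neg]

lemma aux_one_add {v : ℝ} (hv : 0 ≤ v) :
    (Real.sqrt (1 + 2*v))⁻¹ ≤ Real.exp (2*v^2 - v) := by
  have h1 : (0:ℝ) < 1 + 2*v := by linarith
  have hy : (0:ℝ) < 1 - (2*v - 4*v^2) := by nlinarith
  have hkey : Real.exp (2*v - 4*v^2) ≤ 1 + 2*v := by
    have h1w : 1 + -(2*v - 4*v^2) ≤ Real.exp (-(2*v - 4*v^2)) := by
      have := Real.add_one_le_exp (-(2*v - 4*v^2)); linarith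
    have h2 : Real.exp (2*v - 4*v^2) ≤ (1 - (2*v - 4*v^2))⁻¹ := by
      rw [le_inv_comm₀ (Real.exp_pos _) hy] at *
      · rw [← Real.exp_neg] ; linarith
    refine h2.trans ?_
    rw [inv_le_iff_one_le_mul₀ hy]
    nlinarith
  have hsq : Real.exp (v - 2*v^2) ≤ Real.sqrt (1 + 2*v) := by
    have : Real.exp (v - 2*v^2) = Real.sqrt (Real.exp (2*v - 4*v^2)) := by
      rw [show 2*v - 4*v^2 = (v - 2*v^2) + (v - 2*v^2) by ring, Real.exp_add,
        Real.sqrt_mul_self (Real.exp_nonneg _)]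
    rw [this]
    exact Real.sqrt_le_sqrt hkey
  calc (Real.sqrt (1 + 2*v))⁻¹ ≤ (Real.exp (v - 2*v^2))⁻¹ :=
        inv_anti₀ (Real.exp_pos _) hsq
    _ = Real.exp (2*v^2 - v) := by rw [← Real.exp_neg]; ring_nf

lemma gauss_density (v : ℝ≥0) (hv : v ≠ 0) :
    gaussianReal 0 v
      = MeasureTheory.Measure.withDensity MeasureTheory.volume
        (fun x => ((Real.toNNReal (gaussianPDFReal 0 v x) : ℝ≥0) : ℝ≥0∞)) := by
  rw [gaussianReal_of_var_ne_zero 0 hv]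
  rfl

lemma gauss_pointwise (v : ℝ≥0) (hv : v ≠ 0) (c : ℝ) (x : ℝ) :
    gaussianPDFReal 0 v x * Real.exp (c * x ^ 2)
      = (Real.sqrt (2 * Real.pi * v))⁻¹ * Real.exp (-(((2*(v:ℝ))⁻¹ - c)) * x ^ 2) := by
  have hvpos : 0 < (v:ℝ) := by positivity
  rw [gaussianPDFReal, mul_assoc, ← Real.exp_add]
  congr 1
  field_simp
  ring

lemma gauss_b_pos (v : ℝ≥0) (hv : v ≠ 0) (c : ℝ) (hc : 2 * v * c < 1) :
    0 < (2*(v:ℝ))⁻¹ - c := by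
  have hvpos : 0 < (v:ℝ) := by positivity
  have h : (2*(v:ℝ))⁻¹ - c = (1 - 2*v*c)/(2*v) := by field_simp
  rw [h]
  apply div_pos (by linarith) (by positivity)

lemma gauss_exp_sq_integrable (v : ℝ≥0) (hv : v ≠ 0) (c : ℝ) (hc : 2 * v * c < 1) :
    Integrable (fun x => Real.exp (c * x ^ 2)) (gaussianReal 0 v) := by
  have hb := gauss_b_pos v hv c hc
  rw [gauss_density v hv, integrable_withDensity_iff_integrable_coe_smul
    ((measurable_gaussianPDFReal 0 v).real_toNNReal)]
  have : (fun x => ((Real.toNNReal (gaussianPDFReal 0 v x) : ℝ≥0) : ℝ) • Real.exp (c * x ^ 2))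
      = fun x => (Real.sqrt (2 * Real.pi * v))⁻¹ * Real.exp (-(((2*(v:ℝ))⁻¹ - c)) * x ^ 2) := by
    ext x
    rw [Real.coe_toNNReal _ (gaussianPDFReal_nonneg 0 v x), smul_eq_mul,
      gauss_pointwise v hv c x]
  rw [this]
  exact (integrable_exp_neg_mul_sq hb).const_mul _

lemma gauss_exp_sq_integral (v : ℝ≥0) (hv : v ≠ 0) (c : ℝ) (hc : 2 * v * c < 1) :
    ∫ x, Real.exp (c * x ^ 2) ∂(gaussianReal 0 v)
      = (Real.sqrt (1 - 2 * v * c))⁻¹ := by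
  have hvpos : 0 < (v:ℝ) := by positivity
  have hb := gauss_b_pos v hv c hc
  rw [gauss_density v hv, integral_withDensity_eq_integral_smul
    ((measurable_gaussianPDFReal 0 v).real_toNNReal)]
  have heq : (fun x => (Real.toNNReal (gaussianPDFReal 0 v x) : ℝ≥0) • Real.exp (c * x ^ 2))
      = fun x => (Real.sqrt (2 * Real.pi * v))⁻¹ * Real.exp (-(((2*(v:ℝ))⁻¹ - c)) * x ^ 2) := by
    ext x
    rw [NNReal.smul_def, smul_eq_mul, Real.coe_toNNReal _ (gaussianPDFReal_nonneg 0 v x),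
      gauss_pointwise v hv c x]
  rw [heq, integral_const_mul, integral_gaussian,
    ← Real.sqrt_inv (2*Real.pi*(v:ℝ)), ← Real.sqrt_mul (by positivity),
    ← Real.sqrt_inv (1 - 2*(v:ℝ)*c)]
  congr 1
  have hπ : Real.pi ≠ 0 := Real.pi_ne_zero
  field_simp
lemma tail_bound
    (d : ℕ) (hd : 1 ≤ d)
    (Ω : Type) [MeasurableSpace Ω] (μ : Measure Ω) [IsProbabilityMeasure μ]
    (a : Ω → EuclideanSpace ℝ (Fin d))
    (ha_meas : Measurable a)
    (ha_indep : iIndepFun (fun j ω => a ω j) μ)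
    (ha_gauss : ∀ j, μ.map (fun ω => a ω j) = gaussianReal 0 ((d : ℝ≥0)⁻¹))
    (c : Fin d → ℝ) (s : ℝ) (hs : 0 < s)
    (hc : ∀ i, 2 * ((d:ℝ))⁻¹ * (s * c i) < 1) (ε : ℝ) :
    (μ {ω | ε ≤ ∑ i, c i * (a ω i) ^ 2}).toReal
      ≤ Real.exp (-s * ε) * ∏ i, (Real.sqrt (1 - 2 * ((d:ℝ))⁻¹ * (s * c i)))⁻¹ := by
  have hdne : (d : ℝ≥0) ≠ 0 := Nat.cast_ne_zero.2 (by omega)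
  have hv : ((d : ℝ≥0)⁻¹ : ℝ≥0) ≠ 0 := inv_ne_zero hdne
  have hvco : (((d : ℝ≥0)⁻¹ : ℝ≥0) : ℝ) = ((d:ℝ))⁻¹ := by
    push_cast
    rfl
  have hmeasj : ∀ j : Fin d, Measurable (fun ω => a ω j) := fun j =>
    (measurable_pi_apply j).comp ((WithLp.measurable_ofLp _ _).comp ha_meas)
  have hgcont : ∀ b : ℝ, Continuous (fun x : ℝ => Real.exp (b * x ^ 2)) := fun b => by
    fun_prop
  -- coordinate integrability
  have coord_int : ∀ (j : Fin d) (b : ℝ), 2 * ((d:ℝ))⁻¹ * b < 1 →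
      Integrable (fun ω => Real.exp (b * (a ω j) ^ 2)) μ := by
    intro j b hb
    have h1 : Integrable (fun x => Real.exp (b * x ^ 2)) (gaussianReal 0 ((d : ℝ≥0)⁻¹)) :=
      gauss_exp_sq_integrable _ hv b (by rw [hvco]; exact hb)
    rw [← ha_gauss j] at h1
    have := (integrable_map_measure
      ((hgcont b).aestronglyMeasurable) (hmeasj j).aemeasurable).mp h1
    exact this
  have coord_eq : ∀ (j : Fin d) (b : ℝ), 2 * ((d:ℝ))⁻¹ * b < 1 →
      ∫ ω, Real.exp (b * (a ω j) ^ 2) ∂μ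
        = (Real.sqrt (1 - 2 * ((d:ℝ))⁻¹ * b))⁻¹ := by
    intro j b hb
    have h1 : ∫ x, Real.exp (b * x ^ 2) ∂(gaussianReal 0 ((d : ℝ≥0)⁻¹))
        = (Real.sqrt (1 - 2 * ((d:ℝ))⁻¹ * b))⁻¹ := by
      rw [gauss_exp_sq_integral _ hv b (by rw [hvco]; exact hb), hvco]
    rw [← ha_gauss j, integral_map (hmeasj j).aemeasurable
      ((hgcont b).aestronglyMeasurable)] at h1
    exact h1
  -- the summand random variables
  set X : Fin d → Ω → ℝ := fun i ω => c i * (a ω i) ^ 2 with hX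
  have hXmeas : ∀ i, Measurable (X i) := fun i =>
    (((hmeasj i).pow_const 2).const_mul _)
  have hXindep : iIndepFun X μ :=
    ha_indep.comp (fun i x => c i * x ^ 2)
      (fun i => (measurable_id.pow_const 2).const_mul _)
  have hXint : ∀ i, Integrable (fun ω => Real.exp (s * X i ω)) μ := by
    intro i
    have : (fun ω => Real.exp (s * X i ω))
        = fun ω => Real.exp ((s * c i) * (a ω i) ^ 2) := by
      ext ω; rw [hX]; ring_nf
    rw [this]
    exact coord_int i (s * c i) (hc i)
  have hXsum_int : Integrable (fun ω => Real.exp (s * (∑ i, X i) ω)) μ :=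
    hXindep.integrable_exp_mul_sum hXmeas (fun i _ => hXint i)
  have hmgf : mgf (∑ i, X i) μ s = ∏ i, (Real.sqrt (1 - 2 * ((d:ℝ))⁻¹ * (s * c i)))⁻¹ := by
    rw [hXindep.mgf_sum hXmeas]
    refine Finset.prod_congr rfl fun i _ => ?_
    rw [mgf]
    have : (fun ω => Real.exp (s * X i ω))
        = fun ω => Real.exp ((s * c i) * (a ω i) ^ 2) := by
      ext ω; rw [hX]; ring_nf
    rw [show μ[fun ω => Real.exp (s * X i ω)] = ∫ ω, Real.exp (s * X i ω) ∂μ from rfl, this]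
    exact coord_eq i (s * c i) (hc i)
  have hset : {ω | ε ≤ ∑ i, c i * (a ω i) ^ 2} = {ω | ε ≤ (∑ i, X i) ω} := by
    ext ω
    simp [hX, Finset.sum_apply]
  rw [hset, ← hmgf]
  exact measure_ge_le_exp_mul_mgf ε hs.le hXsum_int

/-- For `a ~ N(0, (1/d) I_d)` in `ℝ^d`, weights `0 ≤ λᵢ ≤ 1`, and every `t > 0`,
`P( |Σᵢ λᵢ²·aᵢ² − (Σᵢ λᵢ²)/d| > 2t·√((Σᵢ λᵢ²)/d) + t² + 4/d ) < 2·e^{−d·t²/2}`. -/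
theorem statement_15
    (d : ℕ) (hd : 1 ≤ d)
    (Ω : Type) [MeasurableSpace Ω] (μ : Measure Ω) [IsProbabilityMeasure μ]
    (a : Ω → EuclideanSpace ℝ (Fin d))
    (ha_meas : Measurable a)
    (ha_indep : iIndepFun (fun j ω => a ω j) μ)
    (ha_gauss : ∀ j, μ.map (fun ω => a ω j) = gaussianReal 0 ((d : ℝ≥0)⁻¹))
    (l : Fin d → ℝ) (hl0 : ∀ i, 0 ≤ l i) (hl1 : ∀ i, l i ≤ 1)
    (t : ℝ) (ht : 0 < t) :
    (μ {ω | 2 * t * Real.sqrt ((∑ i, (l i) ^ 2) / d) + t ^ 2 + 4 / d <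
        |∑ i, (l i) ^ 2 * (a ω i) ^ 2 - (∑ i, (l i) ^ 2) / d|}).toReal <
      2 * Real.exp (-(d * t ^ 2 / 2)) := by
  have hdr : (1:ℝ) ≤ (d:ℝ) := by exact_mod_cast hd
  have hd0 : (0:ℝ) < (d:ℝ) := by linarith
  set m := ∑ i, (l i)^2 with hm_def
  have hm_nonneg : 0 ≤ m := Finset.sum_nonneg fun i _ => sq_nonneg _
  have hli : ∀ i, (l i)^2 ≤ 1 := fun i => by nlinarith [hl0 i, hl1 i]
  by_cases hm : m = 0
  · have hl : ∀ i, l i = 0 := by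
      intro i
      have h0 := (Finset.sum_eq_zero_iff_of_nonneg
        (fun i _ => sq_nonneg (l i))).mp hm i (Finset.mem_univ i)
      exact pow_eq_zero_iff two_ne_zero |>.mp h0
    have hset : {ω | 2 * t * Real.sqrt (m / d) + t ^ 2 + 4 / d <
        |∑ i, (l i) ^ 2 * (a ω i) ^ 2 - m / d|} = ∅ := by
      ext ω
      simp only [Set.mem_setOf_eq, Set.mem_empty_iff_false, iff_false, not_lt]
      have h0 : ∑ i, (l i)^2 * (a ω i)^2 = 0 :=
        Finset.sum_eq_zero fun i _ => by rw [hl i]; ring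
      rw [h0, hm]
      simp only [zero_div, sub_zero, abs_zero, Real.sqrt_zero]
      positivity
    rw [hset]
    simp only [measure_empty, ENNReal.toReal_zero]
    positivity
  · have hm_pos : 0 < m := lt_of_le_of_ne hm_nonneg (Ne.symm hm)
    set σ := Real.sqrt (m/d) with hσ_def
    have hσ : 0 < σ := Real.sqrt_pos.mpr (div_pos hm_pos hd0)
    have hσsq : σ^2 = m/d := Real.sq_sqrt (by positivity)
    have hmσ : m = σ^2 * (d:ℝ) := by rw [hσsq]; field_simp
    set u := 2*t*σ + t^2 + 4/(d:ℝ) with hu_def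
    have hu_gt : 2*t*σ + t^2 < u := by
      have : 0 < 4/(d:ℝ) := by positivity
      rw [hu_def]; linarith
    have hA : 0 < σ + t := by linarith
    set s₁ := (d:ℝ)*t/(2*(σ+t)) with hs1_def
    set s₂ := (d:ℝ)*t/(2*σ) with hs2_def
    have hs₁ : 0 < s₁ := by positivity
    have hs₂ : 0 < s₂ := by positivity
    set K := (σ+t)/σ with hK_def
    have hK0 : 0 < K := by positivity
    have hKσ : K*σ = σ+t := by rw [hK_def, div_mul_cancel₀ _ (ne_of_gt hσ)]
    clear_value m σ u s₁ s₂ K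
    -- conditions for tail_bound
    have hc1 : ∀ i, 2*((d:ℝ))⁻¹*(s₁ * (l i)^2) < 1 := by
      intro i
      have h1 : s₁ * (l i)^2 ≤ s₁ := by nlinarith [sq_nonneg (l i), hli i]
      have h2 : 2*((d:ℝ))⁻¹*s₁ = t/(σ+t) := by
        rw [hs1_def]; field_simp
      have h3 : t/(σ+t) < 1 := by rw [div_lt_one hA]; linarith
      calc 2*((d:ℝ))⁻¹*(s₁*(l i)^2) ≤ 2*((d:ℝ))⁻¹*s₁ :=
            mul_le_mul_of_nonneg_left h1 (by positivity)
        _ < 1 := by rw [h2]; exact h3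
    have hc2 : ∀ i, 2*((d:ℝ))⁻¹*(s₂ * (-(l i)^2)) < 1 := by
      intro i
      have h1 : s₂ * (-(l i)^2) ≤ 0 := by nlinarith [sq_nonneg (l i)]
      have h2 : (0:ℝ) < ((d:ℝ))⁻¹ := by positivity
      nlinarith
    -- fourth moment sum bound
    have e2 : ∑ i, ((l i)^2)^2 ≤ m := by
      rw [hm_def]
      apply Finset.sum_le_sum
      intro i _
      nlinarith [sq_nonneg (l i), hli i]
    -- upper tail product bound
    obtain ⟨v, hv_def⟩ : ∃ v : Fin d → ℝ, v = fun i => s₁*(l i)^2/(d:ℝ) := ⟨_, rfl⟩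
    have hv0 : ∀ i, 0 ≤ v i := fun i => by simp only [hv_def]; exact div_nonneg (mul_nonneg hs₁.le (sq_nonneg _)) hd0.le
    have hvb : ∀ i, 2*(v i)*(σ+t) ≤ t := by
      intro i
      have hls : s₁*(l i)^2 ≤ s₁ := by nlinarith [sq_nonneg (l i), hli i]
      have h1 : v i ≤ s₁/(d:ℝ) := by
        simp only [hv_def]
        exact (div_le_div_iff_of_pos_right hd0).mpr hls
      have key : 2*(s₁/(d:ℝ))*(σ+t) = t := by rw [hs1_def]; field_simp
      nlinarith [hv0 i, h1, hA]
    have h2vK : ∀ i, 2*(v i)*K ≤ K - 1 := by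
      intro i
      nlinarith [hvb i, hKσ, hσ, hv0 i]
    have hfac1 : ∀ i, (Real.sqrt (1 - 2*((d:ℝ))⁻¹*(s₁*(l i)^2)))⁻¹
        ≤ Real.exp (v i + 2*(v i)^2*K) := by
      intro i
      have hexpr : 2*((d:ℝ))⁻¹*(s₁*(l i)^2) = 2*(v i) := by simp only [hv_def]; ring
      rw [hexpr]
      have h2v : 2*(v i) < 1 := by rw [← hexpr]; exact hc1 i
      apply aux_one_sub (hv0 i)
        (add_nonneg (hv0 i) (mul_nonneg (mul_nonneg (by norm_num) (sq_nonneg _)) hK0.le)) h2v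
      nlinarith [mul_le_mul_of_nonneg_left (h2vK i) (sq_nonneg (v i)), hv0 i, sq_nonneg (v i)]
    have hprod1 : ∏ i, (Real.sqrt (1 - 2*((d:ℝ))⁻¹*(s₁*(l i)^2)))⁻¹
        ≤ Real.exp (∑ i, (v i + 2*(v i)^2*K)) := by
      rw [Real.exp_sum]
      exact Finset.prod_le_prod (fun i _ => inv_nonneg.mpr (Real.sqrt_nonneg _))
        (fun i _ => hfac1 i)
    have hsum1 : ∑ i, (v i + 2*(v i)^2*K) ≤ s₁*m/(d:ℝ) + 2*K*s₁^2*m/(d:ℝ)^2 := by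
      have e1 : ∑ i, (v i + 2*(v i)^2*K)
          = s₁*m/(d:ℝ) + (2*K*s₁^2/(d:ℝ)^2) * (∑ i, ((l i)^2)^2) := by
        rw [Finset.sum_add_distrib]
        congr 1
        · simp only [hv_def]
          rw [hm_def, ← Finset.sum_div, ← Finset.mul_sum]
        · rw [Finset.mul_sum]
          refine Finset.sum_congr rfl fun i _ => ?_
          simp only [hv_def]
          field_simp
      rw [e1]
      have h3 : (2*K*s₁^2/(d:ℝ)^2) * (∑ i, ((l i)^2)^2) ≤ (2*K*s₁^2/(d:ℝ)^2) * m :=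
        mul_le_mul_of_nonneg_left e2
          (div_nonneg (mul_nonneg (mul_nonneg (by norm_num) hK0.le) (sq_nonneg _)) (sq_nonneg _))
      have h4 : (2*K*s₁^2/(d:ℝ)^2) * m = 2*K*s₁^2*m/(d:ℝ)^2 := by ring
      linarith
    have TB1 := tail_bound d hd Ω μ a ha_meas ha_indep ha_gauss
      (fun i => (l i)^2) s₁ hs₁ hc1 (m/(d:ℝ) + u)
    have tailA : (μ {ω | m/(d:ℝ) + u ≤ ∑ i, (l i)^2 * (a ω i)^2}).toReal
        < Real.exp (-((d:ℝ)*t^2/2)) := by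
      calc (μ {ω | m/(d:ℝ) + u ≤ ∑ i, (l i)^2 * (a ω i)^2}).toReal
          ≤ Real.exp (-s₁*(m/(d:ℝ) + u))
            * ∏ i, (Real.sqrt (1 - 2*((d:ℝ))⁻¹*(s₁*(l i)^2)))⁻¹ := TB1
        _ ≤ Real.exp (-s₁*(m/(d:ℝ) + u)) * Real.exp (∑ i, (v i + 2*(v i)^2*K)) :=
            mul_le_mul_of_nonneg_left hprod1 (Real.exp_nonneg _)
        _ = Real.exp (-s₁*(m/(d:ℝ) + u) + ∑ i, (v i + 2*(v i)^2*K)) := (Real.exp_add _ _).symm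
        _ ≤ Real.exp (-s₁*(m/(d:ℝ) + u) + (s₁*m/(d:ℝ) + 2*K*s₁^2*m/(d:ℝ)^2)) := by
            rw [Real.exp_le_exp]; linarith
        _ < Real.exp (-((d:ℝ)*t^2/2)) := by
            rw [Real.exp_lt_exp]
            have heq : -s₁*(m/(d:ℝ) + u) + (s₁*m/(d:ℝ) + 2*K*s₁^2*m/(d:ℝ)^2)
                = s₁*(t*σ - u) := by
              rw [hmσ, hK_def, hs1_def]
              field_simp
              ring
            rw [heq]
            have h5 : t*σ - u < -(t*(σ+t)) := by
              rw [hu_def]; linarith [div_pos (by norm_num : (0:ℝ) < 4) hd0]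
            have h6 : s₁*(-(t*(σ+t))) = -((d:ℝ)*t^2/2) := by
              rw [hs1_def]; field_simp
            calc s₁*(t*σ - u) < s₁*(-(t*(σ+t))) := by
                  exact mul_lt_mul_of_pos_left h5 hs₁
              _ = -((d:ℝ)*t^2/2) := h6
    -- lower tail
    obtain ⟨w, hw_def⟩ : ∃ w : Fin d → ℝ, w = fun i => s₂*(l i)^2/(d:ℝ) := ⟨_, rfl⟩
    have hw0 : ∀ i, 0 ≤ w i := fun i => by simp only [hw_def]; exact div_nonneg (mul_nonneg hs₂.le (sq_nonneg _)) hd0.le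
    have hfac2 : ∀ i, (Real.sqrt (1 - 2*((d:ℝ))⁻¹*(s₂*(-(l i)^2))))⁻¹
        ≤ Real.exp (2*(w i)^2 - w i) := by
      intro i
      have hexpr : 1 - 2*((d:ℝ))⁻¹*(s₂*(-(l i)^2)) = 1 + 2*(w i) := by simp only [hw_def]; ring
      rw [hexpr]
      exact aux_one_add (hw0 i)
    have hprod2 : ∏ i, (Real.sqrt (1 - 2*((d:ℝ))⁻¹*(s₂*(-(l i)^2))))⁻¹
        ≤ Real.exp (∑ i, (2*(w i)^2 - w i)) := by
      rw [Real.exp_sum]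
      exact Finset.prod_le_prod (fun i _ => inv_nonneg.mpr (Real.sqrt_nonneg _))
        (fun i _ => hfac2 i)
    have hsum2 : ∑ i, (2*(w i)^2 - w i) ≤ 2*s₂^2*m/(d:ℝ)^2 - s₂*m/(d:ℝ) := by
      have e1 : ∑ i, (2*(w i)^2 - w i)
          = (2*s₂^2/(d:ℝ)^2) * (∑ i, ((l i)^2)^2) - s₂*m/(d:ℝ) := by
        rw [Finset.sum_sub_distrib]
        congr 1
        · rw [Finset.mul_sum]
          refine Finset.sum_congr rfl fun i _ => ?_
          simp only [hw_def]
          field_simp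
        · simp only [hw_def]
          rw [hm_def, ← Finset.sum_div, ← Finset.mul_sum]
      rw [e1]
      have h3 : (2*s₂^2/(d:ℝ)^2) * (∑ i, ((l i)^2)^2) ≤ (2*s₂^2/(d:ℝ)^2) * m :=
        mul_le_mul_of_nonneg_left e2
          (div_nonneg (mul_nonneg (by norm_num) (sq_nonneg _)) (sq_nonneg _))
      have h4 : (2*s₂^2/(d:ℝ)^2) * m = 2*s₂^2*m/(d:ℝ)^2 := by ring
      linarith
    have TB2 := tail_bound d hd Ω μ a ha_meas ha_indep ha_gauss
      (fun i => -(l i)^2) s₂ hs₂ hc2 (u - m/(d:ℝ))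
    have tailB : (μ {ω | u - m/(d:ℝ) ≤ ∑ i, -(l i)^2 * (a ω i)^2}).toReal
        < Real.exp (-((d:ℝ)*t^2/2)) := by
      calc (μ {ω | u - m/(d:ℝ) ≤ ∑ i, -(l i)^2 * (a ω i)^2}).toReal
          ≤ Real.exp (-s₂*(u - m/(d:ℝ)))
            * ∏ i, (Real.sqrt (1 - 2*((d:ℝ))⁻¹*(s₂*(-(l i)^2))))⁻¹ := TB2
        _ ≤ Real.exp (-s₂*(u - m/(d:ℝ))) * Real.exp (∑ i, (2*(w i)^2 - w i)) :=
            mul_le_mul_of_nonneg_left hprod2 (Real.exp_nonneg _)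
        _ = Real.exp (-s₂*(u - m/(d:ℝ)) + ∑ i, (2*(w i)^2 - w i)) := (Real.exp_add _ _).symm
        _ ≤ Real.exp (-s₂*(u - m/(d:ℝ)) + (2*s₂^2*m/(d:ℝ)^2 - s₂*m/(d:ℝ))) := by
            rw [Real.exp_le_exp]; linarith
        _ < Real.exp (-((d:ℝ)*t^2/2)) := by
            rw [Real.exp_lt_exp]
            have heq : -s₂*(u - m/(d:ℝ)) + (2*s₂^2*m/(d:ℝ)^2 - s₂*m/(d:ℝ))
                = -s₂*u + (d:ℝ)*t^2/2 := by
              rw [hmσ, hs2_def]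
              field_simp
              ring
            rw [heq]
            have h5 : s₂*(2*t*σ) = (d:ℝ)*t^2 := by rw [hs2_def]; field_simp
            have h6 : s₂*(2*t*σ) < s₂*u :=
              mul_lt_mul_of_pos_left (by linarith [hu_gt, pow_pos ht 2]) hs₂
            have h7 : (d:ℝ)*t^2 < s₂*u := by rw [← h5]; exact h6
            linarith [h7]
    -- combining
    have hsub : {ω | u < |∑ i, (l i)^2 * (a ω i)^2 - m/(d:ℝ)|}
        ⊆ {ω | m/(d:ℝ) + u ≤ ∑ i, (l i)^2 * (a ω i)^2}
          ∪ {ω | u - m/(d:ℝ) ≤ ∑ i, -(l i)^2 * (a ω i)^2} := by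
      intro ω hω
      simp only [Set.mem_setOf_eq] at hω
      rcases lt_abs.mp hω with h | h
      · left
        simp only [Set.mem_setOf_eq]
        linarith
      · right
        simp only [Set.mem_setOf_eq]
        have hneg : ∑ i, -(l i)^2 * (a ω i)^2 = -(∑ i, (l i)^2 * (a ω i)^2) := by
          rw [← Finset.sum_neg_distrib]
          exact Finset.sum_congr rfl fun i _ => by ring
        rw [hneg]
        linarith
    calc (μ {ω | u < |∑ i, (l i)^2 * (a ω i)^2 - m/(d:ℝ)|}).toReal
        ≤ (μ ({ω | m/(d:ℝ) + u ≤ ∑ i, (l i)^2 * (a ω i)^2}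
            ∪ {ω | u - m/(d:ℝ) ≤ ∑ i, -(l i)^2 * (a ω i)^2})).toReal :=
          ENNReal.toReal_mono (measure_ne_top μ _) (measure_mono hsub)
      _ ≤ (μ {ω | m/(d:ℝ) + u ≤ ∑ i, (l i)^2 * (a ω i)^2}).toReal
          + (μ {ω | u - m/(d:ℝ) ≤ ∑ i, -(l i)^2 * (a ω i)^2}).toReal := by
          rw [← ENNReal.toReal_add (measure_ne_top μ _) (measure_ne_top μ _)]
          exact ENNReal.toReal_mono
            (ENNReal.add_ne_top.mpr ⟨measure_ne_top μ _, measure_ne_top μ _⟩)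
            (measure_union_le _ _)
      _ < Real.exp (-((d:ℝ)*t^2/2)) + Real.exp (-((d:ℝ)*t^2/2)) := add_lt_add tailA tailB
      _ = 2 * Real.exp (-((d:ℝ)*t^2/2)) := by ring
end

section
/- Let d ≥ 1, let a ~ N(0, (1/d)I_d) be a Gaussian random vector in ℝ^d with coordinates a₁, …, a_d, and let 0 ≤ λ₁, …, λ_d ≤ 1. Then ( E[ √(Σ_i λ_i²·a_i²) ] )² ≥ (Σ_i λ_i² − 4)/d. In particular (taking all λ_i = 1), (E‖a‖)² ≥ (d − 4)/d. -/
open MeasureTheory ProbabilityTheory Real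
open scoped RealInnerProductSpace ENNReal NNReal

section auxGauss

open Set

lemma aux_rpow_to_pow (n : ℕ) (x : ℝ) : x ^ (n : ℝ) = x ^ n := by
  rw [Real.rpow_natCast]

lemma aux_int_even_pow {b : ℝ} (hb : 0 < b) (n : ℕ) (hn : n ≠ 0) :
    ∫ x : ℝ, x ^ (2 * n) * rexp (-b * x ^ 2) =
      2 * (b ^ (-(((2 * n : ℕ) : ℝ) + 1) / 2) * (1 / 2) *
        Real.Gamma ((((2 * n : ℕ) : ℝ) + 1) / 2)) := by
  have h := integral_rpow_mul_exp_neg_mul_rpow (p := 2) (q := ((2 * n : ℕ) : ℝ))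
    two_pos (by exact lt_of_lt_of_le neg_one_lt_zero (Nat.cast_nonneg _)) hb
  simp_rw [show ((2 : ℝ)) = (((2 : ℕ) : ℝ)) by norm_num, aux_rpow_to_pow] at h
  have heven : (fun x : ℝ => x ^ (2 * n) * rexp (-b * x ^ 2))
      = fun x : ℝ => |x| ^ (2 * n) * rexp (-b * |x| ^ 2) := by
    funext x
    rw [sq_abs, pow_mul, pow_mul, sq_abs]
  rw [heven]
  rw [integral_comp_abs (f := fun x : ℝ => x ^ (2 * n) * rexp (-b * x ^ 2)), h]
  norm_num

lemma aux_int_sq {b : ℝ} (hb : 0 < b) :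
    ∫ x : ℝ, x ^ 2 * rexp (-b * x ^ 2) = Real.sqrt π / 2 * b ^ (-(3 : ℝ) / 2) := by
  have h := aux_int_even_pow hb 1 one_ne_zero
  norm_num [neg_mul] at h
  simp only [neg_mul]
  rw [h, show (-(3:ℝ)/2) = -(3/2) by norm_num, show ((3 : ℝ)) / 2 = 1 / 2 + 1 by norm_num, Real.Gamma_add_one (by norm_num),
    Real.Gamma_one_half_eq]
  ring

lemma aux_int_quartic {b : ℝ} (hb : 0 < b) :
    ∫ x : ℝ, x ^ 4 * rexp (-b * x ^ 2) = 3 * Real.sqrt π / 4 * b ^ (-(5 : ℝ) / 2) := by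
  have h := aux_int_even_pow hb 2 two_ne_zero
  norm_num [neg_mul] at h
  simp only [neg_mul]
  rw [h, show (-(5:ℝ)/2) = -(5/2) by norm_num, show ((5 : ℝ)) / 2 = 3 / 2 + 1 by norm_num, Real.Gamma_add_one (by norm_num),
    show ((3 : ℝ)) / 2 = 1 / 2 + 1 by norm_num, Real.Gamma_add_one (by norm_num),
    Real.Gamma_one_half_eq]
  ring

end auxGauss

section gaussMoments

lemma aux_pdf_eq (v : ℝ≥0) (x : ℝ) :
    gaussianPDFReal 0 v x
      = (Real.sqrt (2 * π * v))⁻¹ * rexp (-(2 * (v : ℝ))⁻¹ * x ^ 2) := by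
  rw [gaussianPDFReal]
  congr 1
  congr 1
  ring

lemma aux_integral_gaussianReal {v : ℝ≥0} (hv : v ≠ 0) (g : ℝ → ℝ) :
    ∫ x, g x ∂(gaussianReal 0 v) = ∫ x, gaussianPDFReal 0 v x * g x := by
  rw [gaussianReal_of_var_ne_zero _ hv]
  have hpdf : gaussianPDF 0 v = fun x => ((gaussianPDFReal 0 v x).toNNReal : ℝ≥0∞) := rfl
  rw [hpdf, integral_withDensity_eq_integral_smul
    ((measurable_gaussianPDFReal 0 v).real_toNNReal) g]
  congr 1
  funext x
  rw [NNReal.smul_def, smul_eq_mul, Real.coe_toNNReal _ (gaussianPDFReal_nonneg _ _ _)]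

lemma aux_integrable_gaussianReal {v : ℝ≥0} (hv : v ≠ 0) (g : ℝ → ℝ)
    (hg : Integrable (fun x => gaussianPDFReal 0 v x * g x)) :
    Integrable g (gaussianReal 0 v) := by
  rw [gaussianReal_of_var_ne_zero _ hv]
  have hpdf : gaussianPDF 0 v = fun x => ((gaussianPDFReal 0 v x).toNNReal : ℝ≥0∞) := rfl
  rw [hpdf, integrable_withDensity_iff_integrable_smul
    ((measurable_gaussianPDFReal 0 v).real_toNNReal)]
  have : (fun x => (gaussianPDFReal 0 v x).toNNReal • g x)
      = fun x => gaussianPDFReal 0 v x * g x := by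
    funext x
    rw [NNReal.smul_def, smul_eq_mul, Real.coe_toNNReal _ (gaussianPDFReal_nonneg _ _ _)]
  rw [this]
  exact hg

lemma aux_integrable_pow_exp {b : ℝ} (hb : 0 < b) (n : ℕ) :
    Integrable (fun x : ℝ => x ^ n * rexp (-b * x ^ 2)) := by
  have := integrable_rpow_mul_exp_neg_mul_sq hb
    (s := (n : ℝ)) (lt_of_lt_of_le neg_one_lt_zero (Nat.cast_nonneg _))
  simpa [Real.rpow_natCast] using this

lemma aux_integrable_pow_gaussianReal {v : ℝ≥0} (hv : v ≠ 0) (n : ℕ) :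
    Integrable (fun x : ℝ => x ^ n) (gaussianReal 0 v) := by
  have hvpos : (0 : ℝ) < v := by
    have := pos_iff_ne_zero.mpr hv
    exact_mod_cast this
  have hb : (0 : ℝ) < (2 * (v : ℝ))⁻¹ := by positivity
  apply aux_integrable_gaussianReal hv
  have : (fun x : ℝ => gaussianPDFReal 0 v x * x ^ n)
      = fun x => (Real.sqrt (2 * π * v))⁻¹ * (x ^ n * rexp (-(2 * (v : ℝ))⁻¹ * x ^ 2)) := by
    funext x
    rw [aux_pdf_eq]
    ring
  rw [this]
  exact (aux_integrable_pow_exp hb n).const_mul _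

lemma aux_mom2 {v : ℝ≥0} (hv : v ≠ 0) :
    ∫ x, x ^ 2 ∂(gaussianReal 0 v) = (v : ℝ) := by
  have hvpos : (0 : ℝ) < v := by
    have := pos_iff_ne_zero.mpr hv
    exact_mod_cast this
  have hw : (0 : ℝ) < 2 * (v : ℝ) := by positivity
  have hb : (0 : ℝ) < (2 * (v : ℝ))⁻¹ := by positivity
  rw [aux_integral_gaussianReal hv]
  have : (fun x : ℝ => gaussianPDFReal 0 v x * x ^ 2)
      = fun x => (Real.sqrt (2 * π * v))⁻¹ * (x ^ 2 * rexp (-(2 * (v : ℝ))⁻¹ * x ^ 2)) := by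
    funext x
    rw [aux_pdf_eq]
    ring
  rw [this, integral_const_mul, aux_int_sq hb]
  rw [Real.inv_rpow hw.le, ← Real.rpow_neg hw.le, neg_div, neg_neg]
  rw [show 2 * π * (v : ℝ) = π * (2 * (v : ℝ)) by ring, Real.sqrt_mul pi_pos.le,
    Real.sqrt_eq_rpow, Real.sqrt_eq_rpow]
  rw [mul_inv, ← Real.rpow_neg hw.le]
  have hAD : (2 * (v:ℝ)) ^ (-(1/2) : ℝ) * (2 * (v:ℝ)) ^ ((3:ℝ)/2) = 2 * (v:ℝ) := by
    rw [← Real.rpow_add hw]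
    norm_num
  have hB : (π ^ ((1:ℝ)/2))⁻¹ * π ^ ((1:ℝ)/2) = 1 := inv_mul_cancel₀ (by positivity)
  linear_combination (1/2 * (π ^ ((1:ℝ)/2))⁻¹ * π ^ ((1:ℝ)/2)) * hAD + (v:ℝ) * hB

lemma aux_mom4 {v : ℝ≥0} (hv : v ≠ 0) :
    ∫ x, x ^ 4 ∂(gaussianReal 0 v) = 3 * (v : ℝ) ^ 2 := by
  have hvpos : (0 : ℝ) < v := by
    have := pos_iff_ne_zero.mpr hv
    exact_mod_cast this
  have hw : (0 : ℝ) < 2 * (v : ℝ) := by positivity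
  have hb : (0 : ℝ) < (2 * (v : ℝ))⁻¹ := by positivity
  rw [aux_integral_gaussianReal hv]
  have : (fun x : ℝ => gaussianPDFReal 0 v x * x ^ 4)
      = fun x => (Real.sqrt (2 * π * v))⁻¹ * (x ^ 4 * rexp (-(2 * (v : ℝ))⁻¹ * x ^ 2)) := by
    funext x
    rw [aux_pdf_eq]
    ring
  rw [this, integral_const_mul, aux_int_quartic hb]
  rw [Real.inv_rpow hw.le, ← Real.rpow_neg hw.le, neg_div, neg_neg]
  rw [show 2 * π * (v : ℝ) = π * (2 * (v : ℝ)) by ring, Real.sqrt_mul pi_pos.le,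
    Real.sqrt_eq_rpow, Real.sqrt_eq_rpow]
  rw [mul_inv, ← Real.rpow_neg hw.le]
  have hAD : (2 * (v:ℝ)) ^ (-(1/2) : ℝ) * (2 * (v:ℝ)) ^ ((5:ℝ)/2) = (2 * (v:ℝ)) * (2 * (v:ℝ)) := by
    rw [← Real.rpow_add hw]
    norm_num
    push_cast
    ring
  have hB : (π ^ ((1:ℝ)/2))⁻¹ * π ^ ((1:ℝ)/2) = 1 := inv_mul_cancel₀ (by positivity)
  linear_combination (3/4 * (π ^ ((1:ℝ)/2))⁻¹ * π ^ ((1:ℝ)/2)) * hAD + (3 * (v:ℝ)^2) * hB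

end gaussMoments

section mainLemma

lemma aux_main
    (d : ℕ) (hd : 1 ≤ d)
    (Ω : Type) [MeasurableSpace Ω] (μ : Measure Ω) [IsProbabilityMeasure μ]
    (a : Ω → EuclideanSpace ℝ (Fin d))
    (ha_meas : Measurable a)
    (ha_indep : iIndepFun (fun j ω => a ω j) μ)
    (ha_gauss : ∀ j, μ.map (fun ω => a ω j) = gaussianReal 0 ((d : ℝ≥0)⁻¹))
    (l : Fin d → ℝ) (hl0 : ∀ i, 0 ≤ l i) (hl1 : ∀ i, l i ≤ 1) :
    ((∑ i, (l i) ^ 2) - 4) / d ≤ (∫ ω, Real.sqrt (∑ i, (l i) ^ 2 * (a ω i) ^ 2) ∂μ) ^ 2 := by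
  have hd0 : (0:ℝ) < d := by exact_mod_cast hd
  set v : ℝ≥0 := (d : ℝ≥0)⁻¹ with hv_def
  have hdnn : ((d : ℝ≥0)) ≠ 0 := by
    exact_mod_cast Nat.one_le_iff_ne_zero.mp hd
  have hv : v ≠ 0 := inv_ne_zero hdnn
  have hvR : (v : ℝ) = (d : ℝ)⁻¹ := by
    rw [hv_def]
    push_cast
    rfl
  have hvpos : (0:ℝ) < v := by rw [hvR]; positivity
  have hmeas : ∀ i, Measurable (fun ω => a ω i) :=
    fun i => (measurable_pi_apply i).comp ((WithLp.measurable_ofLp 2 _).comp ha_meas)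
  have hInt2 : ∀ i, Integrable (fun ω => (a ω i) ^ 2) μ := by
    intro i
    have h := aux_integrable_pow_gaussianReal hv 2
    rw [← ha_gauss i] at h
    exact (integrable_map_measure (by fun_prop) (hmeas i).aemeasurable).mp h
  have hInt4 : ∀ i, Integrable (fun ω => (a ω i) ^ 4) μ := by
    intro i
    have h := aux_integrable_pow_gaussianReal hv 4
    rw [← ha_gauss i] at h
    exact (integrable_map_measure (by fun_prop) (hmeas i).aemeasurable).mp h
  have hMom2 : ∀ i, ∫ ω, (a ω i) ^ 2 ∂μ = (v:ℝ) := by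
    intro i
    rw [← aux_mom2 hv, ← ha_gauss i, integral_map (hmeas i).aemeasurable (by fun_prop)]
  have hMom4 : ∀ i, ∫ ω, (a ω i) ^ 4 ∂μ = 3 * (v:ℝ)^2 := by
    intro i
    rw [← aux_mom4 hv, ← ha_gauss i, integral_map (hmeas i).aemeasurable (by fun_prop)]
  set X : Fin d → Ω → ℝ := fun i ω => l i ^ 2 * (a ω i) ^ 2 with hX_def
  have hXmeas : ∀ i, Measurable (X i) := fun i => ((hmeas i).pow_const 2).const_mul _
  have hXmem : ∀ i, MemLp (X i) 2 μ := by
    intro i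
    rw [memLp_two_iff_integrable_sq (hXmeas i).aestronglyMeasurable]
    have h : (fun ω => X i ω ^ 2) = fun ω => l i ^ 4 * (a ω i) ^ 4 := by
      funext ω
      simp only [hX_def]
      ring
    rw [h]
    exact (hInt4 i).const_mul _
  have hXint : ∀ i, Integrable (X i) μ := fun i => ((hInt2 i).const_mul _)
  set Y : Ω → ℝ := ∑ i, X i with hY_def
  have hYapp : ∀ ω, Y ω = ∑ i, l i ^ 2 * (a ω i) ^ 2 := by
    intro ω
    rw [hY_def]
    simp [hX_def]
  have hY0 : ∀ ω, 0 ≤ Y ω := by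
    intro ω
    rw [hYapp]
    positivity
  have hYmem : MemLp Y 2 μ := memLp_finset_sum' _ (fun i _ => hXmem i)
  have hYint : Integrable Y μ := hYmem.integrable (by norm_num)
  have hYmeas : Measurable Y := by
    have h : Y = fun ω => ∑ i, X i ω := funext fun ω => by rw [hY_def]; simp
    rw [h]
    exact Finset.measurable_sum _ (fun i _ => hXmeas i)
  set S : ℝ := ∑ i, l i ^ 2 with hS_def
  have hS0 : 0 ≤ S := by
    rw [hS_def]
    positivity
  have hEX : ∀ i, ∫ ω, X i ω ∂μ = l i ^ 2 * (v:ℝ) := by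
    intro i
    simp only [hX_def]
    rw [integral_const_mul, hMom2 i]
  have hEY : ∫ ω, Y ω ∂μ = S * v := by
    simp only [hY_def, Finset.sum_apply]
    rw [integral_finset_sum _ (fun i _ => hXint i)]
    simp_rw [hEX]
    rw [← Finset.sum_mul, hS_def]
  have hVarX : ∀ i, variance (X i) μ = 2 * l i ^ 4 * (v:ℝ)^2 := by
    intro i
    rw [variance_eq_sub (hXmem i)]
    have h2 : μ[X i ^ 2] = l i ^ 4 * (3 * (v:ℝ)^2) := by
      rw [show (X i ^ 2 : Ω → ℝ) = fun ω => l i ^ 4 * (a ω i) ^ 4 from funext fun ω => by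
        simp only [hX_def, Pi.pow_apply]; ring]
      rw [integral_const_mul, hMom4 i]
    rw [h2, hEX i]
    ring
  have hVarY : variance Y μ ≤ 2 * S * (v:ℝ)^2 := by
    rw [hY_def, IndepFun.variance_sum (fun i _ => hXmem i) ?pair]
    case pair =>
      intro i _ j hj hij
      exact (ha_indep.indepFun hij).comp
        (measurable_const.mul ((measurable_id.pow_const 2)) :
          Measurable fun x : ℝ => l i ^ 2 * x ^ 2)
        (measurable_const.mul ((measurable_id.pow_const 2)) :
          Measurable fun x : ℝ => l j ^ 2 * x ^ 2)
    calc ∑ i, variance (X i) μ = ∑ i, 2 * l i ^ 4 * (v:ℝ)^2 := by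
          exact Finset.sum_congr rfl fun i _ => hVarX i
      _ ≤ ∑ i, 2 * l i ^ 2 * (v:ℝ)^2 := by
          apply Finset.sum_le_sum
          intro i _
          have h0 : 0 ≤ l i ^ 2 := sq_nonneg _
          have h1 : l i ^ 2 ≤ 1 := by nlinarith [hl0 i, hl1 i]
          have h4 : l i ^ 4 ≤ l i ^ 2 := by nlinarith [mul_nonneg h0 (sub_nonneg.mpr h1)]
          exact mul_le_mul_of_nonneg_right (by linarith) (sq_nonneg _)
      _ = 2 * S * (v:ℝ)^2 := by
          rw [hS_def, Finset.mul_sum, Finset.sum_mul]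
  by_cases hScase : S = 0
  · have h : (S - 4)/(d:ℝ) ≤ 0 := by
      apply div_nonpos_of_nonpos_of_nonneg _ hd0.le
      rw [hScase]; norm_num
    calc (S - 4)/(d:ℝ) ≤ 0 := h
      _ ≤ _ := sq_nonneg _
  have hSpos : 0 < S := lt_of_le_of_ne hS0 (Ne.symm hScase)
  set m : ℝ := S * (v:ℝ) with hm_def
  have hm : 0 < m := mul_pos hSpos hvpos
  have hsqmeas : Measurable (fun ω => Real.sqrt (Y ω)) := Real.continuous_sqrt.measurable.comp hYmeas
  have hsqint : Integrable (fun ω => Real.sqrt (Y ω)) μ := by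
    refine Integrable.mono' (g := fun ω => (Y ω + 1)/2)
      ((hYint.add (integrable_const 1)).div_const 2) hsqmeas.aestronglyMeasurable ?_
    filter_upwards with ω
    rw [Real.norm_eq_abs, abs_of_nonneg (Real.sqrt_nonneg _)]
    nlinarith [Real.sq_sqrt (hY0 ω), Real.sqrt_nonneg (Y ω), sq_nonneg (Real.sqrt (Y ω) - 1)]
  set E : ℝ := ∫ ω, Real.sqrt (Y ω) ∂μ with hE_def
  have hE0 : 0 ≤ E := integral_nonneg (fun ω => Real.sqrt_nonneg _)
  set t : ℝ := Real.sqrt m with ht_def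
  have ht2 : t ^ 2 = m := Real.sq_sqrt hm.le
  have ht0 : 0 ≤ t := Real.sqrt_nonneg _
  have hpt : ∀ ω, (Real.sqrt (Y ω) - t) ^ 2 ≤ (Y ω - m) ^ 2 / m := by
    intro ω
    rw [le_div_iff₀ hm]
    have hs2 := Real.sq_sqrt (hY0 ω)
    have hs0 := Real.sqrt_nonneg (Y ω)
    nlinarith [sq_nonneg ((Real.sqrt (Y ω) - t) * Real.sqrt (Y ω)),
      mul_nonneg (mul_nonneg hs0 ht0) (sq_nonneg (Real.sqrt (Y ω) - t))]
  have hexp : (fun ω => (Real.sqrt (Y ω) - t) ^ 2)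
      = fun ω => (Y ω + t ^ 2) - (2 * t) * Real.sqrt (Y ω) := by
    funext ω
    have hs2 := Real.sq_sqrt (hY0 ω)
    linear_combination hs2
  have hint1 : Integrable (fun ω => (Real.sqrt (Y ω) - t) ^ 2) μ := by
    rw [hexp]
    exact (hYint.add (integrable_const _)).sub (hsqint.const_mul _)
  have hint2 : Integrable (fun ω => (Y ω - m) ^ 2 / m) μ := by
    apply Integrable.div_const
    have h := (hYmem.sub (memLp_const m)).integrable_sq
    simpa using h
  have hcmp := integral_mono hint1 hint2 hpt
  have hL : ∫ ω, (Real.sqrt (Y ω) - t) ^ 2 ∂μ = 2 * m - 2 * t * E := by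
    have hf1 : Integrable (fun ω => Y ω + t ^ 2) μ := hYint.add (integrable_const _)
    have hf2 : Integrable (fun ω => 2 * t * Real.sqrt (Y ω)) μ := hsqint.const_mul _
    rw [hexp, integral_sub hf1 hf2, integral_add hYint (integrable_const _),
      integral_const_mul, integral_const, probReal_univ, hEY, ← hE_def]
    simp only [ENNReal.toReal_one, one_smul, smul_eq_mul]
    linear_combination ht2 + hm_def
  have hR : ∫ ω, (Y ω - m) ^ 2 / m ∂μ = variance Y μ / m := by
    rw [integral_div]
    congr 1
    rw [variance_eq_integral hYmeas.aemeasurable]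
    have h : ((Y - fun _ => μ[Y]) ^ (2:ℕ) : Ω → ℝ) = fun ω => (Y ω - m) ^ 2 := by
      funext ω
      simp [hEY, hm_def]
    simp only [hEY]
  have hkey : 2 * m - 2 * t * E ≤ variance Y μ / m := by
    rw [← hL, ← hR]
    exact hcmp
  have hW : variance Y μ / m ≤ 2 * (v:ℝ) := by
    rw [div_le_iff₀ hm]
    calc variance Y μ ≤ 2 * S * (v:ℝ)^2 := hVarY
      _ = 2 * (v:ℝ) * m := by rw [hm_def]; ring
  have hfinal : (S - 2) * (v:ℝ) ≤ E ^ 2 := by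
    nlinarith [sq_nonneg (E - t), hkey, hW, ht2]
  have hgoalint : (∫ ω, Real.sqrt (∑ i, (l i) ^ 2 * (a ω i) ^ 2) ∂μ) = E := by
    rw [hE_def]
    congr 1
    funext ω
    rw [hYapp]
  rw [hgoalint]
  calc (S - 4)/(d:ℝ) ≤ (S - 2) * (v:ℝ) := by
        rw [hvR, div_eq_mul_inv]
        exact mul_le_mul_of_nonneg_right (by linarith) (by positivity)
    _ ≤ E ^ 2 := hfinal

end mainLemma

/-- For `a ~ N(0, (1/d) I_d)` in `ℝ^d` and weights `0 ≤ λᵢ ≤ 1`,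
`( E[√(Σᵢ λᵢ²·aᵢ²)] )² ≥ (Σᵢ λᵢ² − 4)/d`; in particular `(E‖a‖)² ≥ (d − 4)/d`. -/
theorem statement_16
    (d : ℕ) (hd : 1 ≤ d)
    (Ω : Type) [MeasurableSpace Ω] (μ : Measure Ω) [IsProbabilityMeasure μ]
    (a : Ω → EuclideanSpace ℝ (Fin d))
    (ha_meas : Measurable a)
    (ha_indep : iIndepFun (fun j ω => a ω j) μ)
    (ha_gauss : ∀ j, μ.map (fun ω => a ω j) = gaussianReal 0 ((d : ℝ≥0)⁻¹))
    (l : Fin d → ℝ) (hl0 : ∀ i, 0 ≤ l i) (hl1 : ∀ i, l i ≤ 1) :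
    (∫ ω, Real.sqrt (∑ i, (l i) ^ 2 * (a ω i) ^ 2) ∂μ) ^ 2 ≥ ((∑ i, (l i) ^ 2) - 4) / d ∧
      (∫ ω, ‖a ω‖ ∂μ) ^ 2 ≥ ((d : ℝ) - 4) / d := by
  constructor
  · exact aux_main d hd Ω μ a ha_meas ha_indep ha_gauss l hl0 hl1
  · have h := aux_main d hd Ω μ a ha_meas ha_indep ha_gauss
      (fun _ => 1) (fun _ => zero_le_one) (fun _ => le_rfl)
    simp only [one_pow, one_mul] at h
    rw [Finset.sum_const, Finset.card_univ, Fintype.card_fin, nsmul_eq_mul, mul_one] at h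
    have h2 : (∫ ω, ‖a ω‖ ∂μ) = ∫ ω, Real.sqrt (∑ i, (a ω i) ^ 2) ∂μ := by
      congr 1
      funext ω
      rw [EuclideanSpace.norm_eq]
      congr 1
      exact Finset.sum_congr rfl fun i _ => by rw [Real.norm_eq_abs, sq_abs]
    rw [ge_iff_le, h2]
    exact h
end
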